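/- (Scalarization of Shapley equilibria.) A pair (p̄,q̄) ∈ P × Q is a Shapley equilibrium, i.e. v(p̄,q̄) ∈ Max v_I(p̄) ∩ Min v_II(q̄), if and only if there exist α, β ∈ int ℝ^K_+ (vectors with all components strictly positive) such that αᵀ v(p̄,q̄) = max_{q∈Q} αᵀ v(p̄,q) and βᵀ v(p̄,q̄) = min_{p∈P} βᵀ v(p,q̄). -/

import Mathlib

open Set

noncomputable section

/-- The mixed-strategy simplex in `ℝ^m`. -/
def simplex (m : ℕ) : Set (Fin m → ℝ) := {p | (∀ i, 0 ≤ p i) ∧ ∑ i, p i = 1}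

/-- Expected vector payoff `v(p,q) = Σ_i Σ_j p_i g_{ij} q_j`. -/
def payoff {K m n : ℕ} (g : Fin m → Fin n → (Fin K → ℝ)) (p : Fin m → ℝ) (q : Fin n → ℝ) :
    Fin K → ℝ := ∑ i, ∑ j, (p i * q j) • g i j

/-- `v_I(p) = {v(p,q) : q ∈ Q}`. -/
def vI {K m n : ℕ} (g : Fin m → Fin n → (Fin K → ℝ)) (p : Fin m → ℝ) : Set (Fin K → ℝ) :=
  {y | ∃ q ∈ simplex n, y = payoff g p q}

/-- `V_I(p) = v_I(p) - ℝ^K_+`. -/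
def VI {K m n : ℕ} (g : Fin m → Fin n → (Fin K → ℝ)) (p : Fin m → ℝ) : Set (Fin K → ℝ) :=
  {y | ∃ z ∈ vI g p, y ≤ z}

/-- `v_II(q) = {v(p,q) : p ∈ P}`. -/
def vII {K m n : ℕ} (g : Fin m → Fin n → (Fin K → ℝ)) (q : Fin n → ℝ) : Set (Fin K → ℝ) :=
  {y | ∃ p ∈ simplex m, y = payoff g p q}

/-- `V_II(q) = v_II(q) + ℝ^K_+`. -/
def VII {K m n : ℕ} (g : Fin m → Fin n → (Fin K → ℝ)) (q : Fin n → ℝ) : Set (Fin K → ℝ) :=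
  {y | ∃ z ∈ vII g q, z ≤ y}

/-- Maximal points of a set w.r.t. the componentwise order. -/
def maxSet {K : ℕ} (A : Set (Fin K → ℝ)) : Set (Fin K → ℝ) :=
  {z ∈ A | ∀ y ∈ A, z ≤ y → y = z}

/-- Minimal points of a set w.r.t. the componentwise order. -/
def minSet {K : ℕ} (A : Set (Fin K → ℝ)) : Set (Fin K → ℝ) :=
  {z ∈ A | ∀ y ∈ A, y ≤ z → y = z}

/-- `p̄` is a minimal strategy for player I: no `p ∈ P` with `V_I(p) ⊆ V_I(p̄)`
and `V_I(p) ≠ V_I(p̄)`. -/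
def MinimalStrat {K m n : ℕ} (g : Fin m → Fin n → (Fin K → ℝ)) (pbar : Fin m → ℝ) : Prop :=
  ∀ p ∈ simplex m, VI g p ⊆ VI g pbar → VI g p = VI g pbar

/-- `q̄` is a maximal strategy for player II: no `q ∈ Q` with `V_II(q) ⊆ V_II(q̄)`
and `V_II(q) ≠ V_II(q̄)`. -/
def MaximalStrat {K m n : ℕ} (g : Fin m → Fin n → (Fin K → ℝ)) (qbar : Fin n → ℝ) : Prop :=
  ∀ q ∈ simplex n, VII g q ⊆ VII g qbar → VII g q = VII g qbar



namespace Stmt19Aux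

variable {K N : ℕ}

/-- Nonnegative combinations of `v` over a finset of indices. -/
def coneOn (v : Fin N → (Fin K → ℝ)) (s : Finset (Fin N)) : Set (Fin K → ℝ) :=
  {x | ∃ c : Fin N → ℝ, (∀ i, 0 ≤ c i) ∧ x = ∑ i ∈ s, c i • v i}

/-- The finitely generated convex cone of `v`. -/
def coneOf (v : Fin N → (Fin K → ℝ)) : Set (Fin K → ℝ) := coneOn v Finset.univ

lemma zero_mem_coneOf (v : Fin N → (Fin K → ℝ)) : 0 ∈ coneOf v :=
  ⟨0, fun _ => le_refl 0, by simp⟩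

lemma generator_mem_coneOf (v : Fin N → (Fin K → ℝ)) (i0 : Fin N) : v i0 ∈ coneOf v := by
  classical
  refine ⟨fun i => if i = i0 then 1 else 0, fun i => by positivity, ?_⟩
  rw [Finset.sum_eq_single i0]
  · simp
  · intro b _ hb; simp [hb]
  · simp

lemma smul_mem_coneOf (v : Fin N → (Fin K → ℝ)) {x : Fin K → ℝ} {a : ℝ}
    (hx : x ∈ coneOf v) (ha : 0 ≤ a) : a • x ∈ coneOf v := by
  obtain ⟨c, hc, rfl⟩ := hx
  exact ⟨fun i => a * c i, fun i => mul_nonneg ha (hc i), by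
    rw [Finset.smul_sum]; exact Finset.sum_congr rfl fun i _ => (mul_smul a (c i) (v i)).symm⟩

lemma convex_coneOf (v : Fin N → (Fin K → ℝ)) : Convex ℝ (coneOf v) := by
  rintro x ⟨c, hc, rfl⟩ y ⟨c', hc', rfl⟩ a b ha hb hab
  refine ⟨fun i => a * c i + b * c' i,
    fun i => add_nonneg (mul_nonneg ha (hc i)) (mul_nonneg hb (hc' i)), ?_⟩
  rw [Finset.smul_sum, Finset.smul_sum, ← Finset.sum_add_distrib]
  exact Finset.sum_congr rfl fun i _ => by rw [add_smul, mul_smul, mul_smul]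

lemma caratheodory (v : Fin N → (Fin K → ℝ)) :
    ∀ (s : Finset (Fin N)) (c : Fin N → ℝ), (∀ i, 0 ≤ c i) →
    ∃ (t : Finset (Fin N)) (c' : Fin N → ℝ),
      LinearIndependent ℝ (fun i : t => v i) ∧ (∀ i, 0 ≤ c' i) ∧
      ∑ i ∈ t, c' i • v i = ∑ i ∈ s, c i • v i := by
  classical
  intro s
  induction s using Finset.strongInduction with
  | _ s ih =>
    intro c hc
    by_cases hind : LinearIndependent ℝ (fun i : s => v i)
    · exact ⟨s, c, hind, hc, rfl⟩
    · rw [Fintype.not_linearIndependent_iff] at hind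
      obtain ⟨g, hg0, i1, hi1⟩ := hind
      -- turn g into a function on Fin N supported on s, with a positive value somewhere
      have key : ∃ t : Fin N → ℝ, (∑ i ∈ s, t i • v i = 0) ∧ (∃ i ∈ s, 0 < t i) ∧
          (∀ i, i ∉ s → t i = 0) := by
        set t0 : Fin N → ℝ := fun i => if h : i ∈ s then g ⟨i, h⟩ else 0 with ht0
        have hsum0 : ∑ i ∈ s, t0 i • v i = 0 := by
          rw [← Finset.sum_coe_sort s (fun i => t0 i • v i)]
          have : ∀ i : s, t0 ↑i • v ↑i = g i • v ↑i := by
            intro i; simp [ht0, i.2]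
          rw [Finset.sum_congr rfl fun i _ => this i]
          exact hg0
        rcases lt_or_gt_of_ne hi1 with hneg | hpos
        · refine ⟨-t0, by simpa using hsum0, ⟨i1, i1.2, ?_⟩, fun i hi => by simp [ht0, hi]⟩
          simp only [Pi.neg_apply, ht0, dif_pos i1.2]
          simpa using hneg
        · refine ⟨t0, hsum0, ⟨i1, i1.2, ?_⟩, fun i hi => by simp [ht0, hi]⟩
          simpa [ht0, dif_pos i1.2] using hpos
      obtain ⟨t, hts, ⟨i2, hi2s, hi2pos⟩, htout⟩ := key
      set F := s.filter (fun i => 0 < t i) with hF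
      have hFne : F.Nonempty := ⟨i2, Finset.mem_filter.mpr ⟨hi2s, hi2pos⟩⟩
      obtain ⟨i0, hi0F, hmin⟩ := Finset.exists_min_image F (fun i => c i / t i) hFne
      have hi0s : i0 ∈ s := (Finset.mem_filter.mp hi0F).1
      have hti0 : 0 < t i0 := (Finset.mem_filter.mp hi0F).2
      set r := c i0 / t i0 with hr
      have hr0 : 0 ≤ r := div_nonneg (hc i0) hti0.le
      set c2 : Fin N → ℝ := fun i => c i - r * t i with hc2
      have hc2nn : ∀ i, 0 ≤ c2 i := by
        intro i
        by_cases hp : 0 < t i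
        · have his : i ∈ s := by
            by_contra h; rw [htout i h] at hp; exact lt_irrefl 0 hp
          have hle : r ≤ c i / t i := hmin i (Finset.mem_filter.mpr ⟨his, hp⟩)
          have := (le_div_iff₀ hp).mp hle
          simp only [hc2]; linarith
        · push_neg at hp
          have : r * t i ≤ 0 := mul_nonpos_of_nonneg_of_nonpos hr0 hp
          have := hc i
          simp only [hc2]; linarith
      have hc2i0 : c2 i0 = 0 := by
        simp only [hc2, hr]
        rw [div_mul_cancel₀ _ hti0.ne']
        ring
      have hsumeq : ∑ i ∈ s, c2 i • v i = ∑ i ∈ s, c i • v i := by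
        have : ∀ i ∈ s, c2 i • v i = c i • v i - (r * t i) • v i := by
          intro i _; rw [hc2]; rw [sub_smul]
        rw [Finset.sum_congr rfl this, Finset.sum_sub_distrib]
        have : ∑ i ∈ s, (r * t i) • v i = r • ∑ i ∈ s, t i • v i := by
          rw [Finset.smul_sum]
          exact Finset.sum_congr rfl fun i _ => (mul_smul r (t i) (v i))
        rw [this, hts, smul_zero, sub_zero]
      have herase : ∑ i ∈ s.erase i0, c2 i • v i = ∑ i ∈ s, c2 i • v i :=
        Finset.sum_erase s (by rw [hc2i0, zero_smul])
      obtain ⟨t', c', hli, hnn, heq⟩ := ih (s.erase i0) (Finset.erase_ssubset hi0s) c2 hc2nn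
      exact ⟨t', c', hli, hnn, by rw [heq, herase, hsumeq]⟩

lemma isClosed_coneOn_of_li (v : Fin N → (Fin K → ℝ)) (t : Finset (Fin N))
    (h : LinearIndependent ℝ (fun i : t => v i)) : IsClosed (coneOn v t) := by
  classical
  let L : ({x // x ∈ t} → ℝ) →ₗ[ℝ] (Fin K → ℝ) :=
    { toFun := fun c => ∑ i : t, c i • v ↑i
      map_add' := by
        intro a b
        rw [← Finset.sum_add_distrib]
        exact Finset.sum_congr rfl fun i _ => add_smul (a i) (b i) (v ↑i)
      map_smul' := by
        intro m a
        simp only [RingHom.id_apply]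
        rw [Finset.smul_sum]
        exact Finset.sum_congr rfl fun i _ => smul_assoc m (a i) (v ↑i) }
  have hker : LinearMap.ker L = ⊥ := by
    rw [LinearMap.ker_eq_bot']
    intro c hcz
    exact funext (Fintype.linearIndependent_iff.mp h c hcz)
  have hemb := LinearMap.isClosedEmbedding_of_injective hker
  have horth : IsClosed {c : {x // x ∈ t} → ℝ | ∀ i, 0 ≤ c i} := by
    have : {c : {x // x ∈ t} → ℝ | ∀ i, 0 ≤ c i} = ⋂ i, {c | 0 ≤ c i} := by
      ext c; simp [Set.mem_iInter]
    rw [this]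
    exact isClosed_iInter fun i => isClosed_le continuous_const (continuous_apply i)
  have himg : coneOn v t = L '' {c | ∀ i, 0 ≤ c i} := by
    ext x
    constructor
    · rintro ⟨c, hc, rfl⟩
      refine ⟨fun i => c ↑i, fun i => hc ↑i, ?_⟩
      show ∑ i : t, c ↑i • v ↑i = _
      exact Finset.sum_coe_sort t (fun i => c i • v i)
    · rintro ⟨c, hc, rfl⟩
      refine ⟨fun i => if h : i ∈ t then c ⟨i, h⟩ else 0, ?_, ?_⟩
      · intro i
        by_cases h : i ∈ t
        · simp only [dif_pos h]; exact hc _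
        · simp [h]
      · show L c = ∑ i ∈ t, _ • v i
        rw [← Finset.sum_coe_sort t (fun i => (if h : i ∈ t then c ⟨i, h⟩ else 0) • v i)]
        exact Finset.sum_congr rfl fun i _ => by simp [i.2]
  rw [himg]
  exact hemb.isClosedMap _ horth

lemma coneOn_subset_coneOf (v : Fin N → (Fin K → ℝ)) (t : Finset (Fin N)) :
    coneOn v t ⊆ coneOf v := by
  classical
  rintro x ⟨c, hc, rfl⟩
  refine ⟨fun i => if i ∈ t then c i else 0, fun i => by by_cases h : i ∈ t <;> simp [h, hc i], ?_⟩
  have : ∀ i ∈ Finset.univ, (if i ∈ t then c i else 0) • v i = if i ∈ t then c i • v i else 0 := by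
    intro i _; by_cases h : i ∈ t <;> simp [h]
  rw [Finset.sum_congr rfl this, Finset.sum_ite_mem, Finset.univ_inter]

lemma isClosed_coneOf (v : Fin N → (Fin K → ℝ)) : IsClosed (coneOf v) := by
  have : coneOf v =
      ⋃ t : {t : Finset (Fin N) // LinearIndependent ℝ (fun i : t => v i)}, coneOn v t.1 := by
    apply Set.Subset.antisymm
    · rintro x ⟨c, hc, rfl⟩
      obtain ⟨t, c', hli, hnn, heq⟩ := caratheodory v Finset.univ c hc
      exact Set.mem_iUnion.mpr ⟨⟨t, hli⟩, c', hnn, heq.symm⟩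
    · refine Set.iUnion_subset fun t => ?_
      exact coneOn_subset_coneOf v t.1
  rw [this]
  exact isClosed_iUnion_of_finite fun t => isClosed_coneOn_of_li v t.1 t.2

end Stmt19Aux

namespace Stmt19Aux

lemma single_mem_stdSimplex (K : ℕ) (k : Fin K) : Pi.single k (1:ℝ) ∈ stdSimplex ℝ (Fin K) := by
  constructor
  · intro k'
    by_cases h : k' = k <;> simp [Pi.single_apply, h]
  · simp

/-- Key scalarization lemma: if no convex combination of the `d j` is `≥ 0` and nonzero,
then there is a strictly positive functional that is `≤ 0` on all `d j`. -/
lemma exists_pos_functional {K n : ℕ} (d : Fin n → (Fin K → ℝ))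
    (H : ∀ l : Fin n → ℝ, (∀ j, 0 ≤ l j) → ∑ j, l j = 1 →
      (∀ k, 0 ≤ (∑ j, l j • d j) k) → (∑ j, l j • d j) = 0) :
    ∃ α : Fin K → ℝ, (∀ k, 0 < α k) ∧ ∀ j, ∑ k, α k * d j k ≤ 0 := by
  classical
  set w : Fin (n + K) → (Fin K → ℝ) :=
    Fin.append d (fun k => -(Pi.single k 1 : Fin K → ℝ)) with hw
  have hdisj : Disjoint (coneOf w) (stdSimplex ℝ (Fin K)) := by
    rw [Set.disjoint_left]
    rintro x ⟨c, hc, rfl⟩ hxS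
    set lam : Fin n → ℝ := fun j => c (Fin.castAdd K j) with hlam
    set mu : Fin K → ℝ := fun k => c (Fin.natAdd n k) with hmu
    set x := ∑ i, c i • w i with hx
    have hxsplit : x = (∑ j, lam j • d j) - ∑ k, mu k • (Pi.single k 1 : Fin K → ℝ) := by
      rw [hx, Fin.sum_univ_add, sub_eq_add_neg, ← Finset.sum_neg_distrib]
      congr 1
      · exact Finset.sum_congr rfl fun j _ => by rw [hw, Fin.append_left]
      · exact Finset.sum_congr rfl fun k _ => by rw [hw, Fin.append_right, smul_neg]
    set u : Fin K → ℝ := ∑ k, mu k • (Pi.single k 1 : Fin K → ℝ) with hu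
    have huk : ∀ k, u k = mu k := by
      intro k
      rw [hu]
      simp [Finset.sum_apply, Pi.single_apply]
    have hD : ∀ k, 0 ≤ (∑ j, lam j • d j) k := by
      intro k
      have : (∑ j, lam j • d j) k = x k + u k := by
        rw [hxsplit]; simp [hu]
      rw [this, huk]
      exact add_nonneg (hxS.1 k) (hc _)
    have hxsum : ∑ k, x k = 1 := hxS.2
    have hcontr : (∑ j, lam j • d j) ≠ 0 := by
      intro h0
      have hxneg : ∀ k, x k ≤ 0 := by
        intro k
        have hk := congrFun hxsplit k
        rw [h0] at hk
        have hxk : x k = -u k := by simpa using hk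
        rw [hxk, huk]
        exact neg_nonpos.mpr (hc _)
      have hle : ∑ k, x k ≤ 0 := Finset.sum_nonpos fun k _ => hxneg k
      linarith [hxsum]
    set s := ∑ j, lam j with hs
    have hs0 : 0 ≤ s := Finset.sum_nonneg fun j _ => hc _
    rcases eq_or_lt_of_le hs0 with hseq | hspos
    · -- all lam j = 0, so sum is 0, contradiction
      have : ∀ j ∈ Finset.univ, lam j = 0 :=
        (Finset.sum_eq_zero_iff_of_nonneg (fun j _ => hc _)).mp hseq.symm
      exact hcontr (Finset.sum_eq_zero fun j hj => by rw [this j hj, zero_smul])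
    · set l : Fin n → ℝ := fun j => lam j / s with hl
      have hl0 : ∀ j, 0 ≤ l j := fun j => div_nonneg (hc _) hspos.le
      have hl1 : ∑ j, l j = 1 := by
        rw [hl]
        simp only []
        rw [← Finset.sum_div, ← hs, div_self hspos.ne']
      have hldsum : (∑ j, l j • d j) = s⁻¹ • ∑ j, lam j • d j := by
        rw [Finset.smul_sum]
        exact Finset.sum_congr rfl fun j _ => by
          show (lam j / s) • d j = s⁻¹ • lam j • d j
          rw [div_eq_inv_mul, mul_smul]
      have hlpos : ∀ k, 0 ≤ (∑ j, l j • d j) k := by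
        intro k
        rw [hldsum]
        simpa using mul_nonneg (inv_nonneg.mpr hspos.le) (hD k)
      have hH := H l hl0 hl1 hlpos
      rw [hldsum] at hH
      rcases smul_eq_zero.mp hH with h | h
      · exact absurd h (by positivity)
      · exact hcontr h
  obtain ⟨f, u, v', hfu, huv, hfS⟩ :=
    geometric_hahn_banach_closed_compact (convex_coneOf w) (isClosed_coneOf w)
      (convex_stdSimplex ℝ (Fin K)) (isCompact_stdSimplex ℝ (Fin K)) hdisj
  have hu0 : 0 < u := by
    have := hfu 0 (zero_mem_coneOf w)
    simpa using this
  have hfle : ∀ x ∈ coneOf w, f x ≤ 0 := by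
    intro x hx
    by_contra h
    push_neg at h
    have hmem := smul_mem_coneOf w hx (div_nonneg hu0.le h.le)
    have := hfu _ hmem
    rw [map_smul, smul_eq_mul, div_mul_cancel₀ _ h.ne'] at this
    exact lt_irrefl u this
  set α : Fin K → ℝ := fun k => f (Pi.single k (1:ℝ)) with hα
  have hαpos : ∀ k, 0 < α k := by
    intro k
    have := hfS _ (single_mem_stdSimplex K k)
    rw [hα]; linarith
  have hfx : ∀ x : Fin K → ℝ, f x = ∑ k, x k * α k := by
    intro x
    have hrep : x = ∑ k, x k • (Pi.single k 1 : Fin K → ℝ) := by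
      funext k'
      simp [Finset.sum_apply, Pi.single_apply]
    conv_lhs => rw [hrep]
    rw [map_sum]
    exact Finset.sum_congr rfl fun k _ => by rw [map_smul, smul_eq_mul, hα]
  refine ⟨α, hαpos, fun j => ?_⟩
  have hdj : d j ∈ coneOf w := by
    have := generator_mem_coneOf w (Fin.castAdd K j)
    rwa [hw, Fin.append_left] at this
  have := hfle _ hdj
  rw [hfx] at this
  calc ∑ k, α k * d j k = ∑ k, d j k * α k := Finset.sum_congr rfl fun k _ => mul_comm _ _
    _ ≤ 0 := this

end Stmt19Aux

namespace Stmt19Aux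

lemma payoff_eq_colsum {K m n : ℕ} (g : Fin m → Fin n → (Fin K → ℝ)) (p : Fin m → ℝ)
    (q : Fin n → ℝ) : payoff g p q = ∑ j, q j • (∑ i, p i • g i j) := by
  unfold payoff
  rw [Finset.sum_comm]
  refine Finset.sum_congr rfl fun j _ => ?_
  rw [Finset.smul_sum]
  exact Finset.sum_congr rfl fun i _ => by rw [smul_smul, mul_comm]

lemma payoff_eq_rowsum {K m n : ℕ} (g : Fin m → Fin n → (Fin K → ℝ)) (p : Fin m → ℝ)
    (q : Fin n → ℝ) : payoff g p q = ∑ i, p i • (∑ j, q j • g i j) := by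
  unfold payoff
  refine Finset.sum_congr rfl fun i _ => ?_
  rw [Finset.smul_sum]
  exact Finset.sum_congr rfl fun j _ => (smul_smul (p i) (q j) (g i j)).symm

end Stmt19Aux

open Stmt19Aux in
theorem stmt19 {K m n : ℕ} (hK : 0 < K) (hm : 0 < m) (hn : 0 < n)
    (g : Fin m → Fin n → (Fin K → ℝ)) (pbar : Fin m → ℝ) (qbar : Fin n → ℝ)
    (hpbar : pbar ∈ simplex m) (hqbar : qbar ∈ simplex n) :
    payoff g pbar qbar ∈ maxSet (vI g pbar) ∩ minSet (vII g qbar) ↔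
      ∃ α β : Fin K → ℝ, (∀ k, 0 < α k) ∧ (∀ k, 0 < β k) ∧
        (∀ q ∈ simplex n,
          ∑ k, α k * payoff g pbar q k ≤ ∑ k, α k * payoff g pbar qbar k) ∧
        (∀ p ∈ simplex m,
          ∑ k, β k * payoff g pbar qbar k ≤ ∑ k, β k * payoff g p qbar k) := by
  set vb := payoff g pbar qbar with hvb
  constructor
  · rintro ⟨hmax, hmin⟩
    obtain ⟨-, hmax2⟩ := hmax
    obtain ⟨-, hmin2⟩ := hmin
    -- the α part
    obtain ⟨α, hαpos, hαle⟩ := exists_pos_functional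
      (d := fun j => (∑ i, pbar i • g i j) - vb) (by
        intro l hl0 hl1 hk
        have hsum : (∑ j, l j • ((∑ i, pbar i • g i j) - vb)) = payoff g pbar l - vb := by
          rw [Finset.sum_congr rfl (fun j _ => smul_sub (l j) _ vb), Finset.sum_sub_distrib,
            ← payoff_eq_colsum, ← Finset.sum_smul, hl1, one_smul]
        rw [hsum] at hk ⊢
        have hle : vb ≤ payoff g pbar l := by
          intro k
          have := hk k
          simp only [Pi.sub_apply] at this
          linarith
        have heq : payoff g pbar l = vb := hmax2 _ ⟨l, ⟨hl0, hl1⟩, rfl⟩ hle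
        rw [heq, sub_self])
    -- the β part
    obtain ⟨β, hβpos, hβle⟩ := exists_pos_functional
      (d := fun i => vb - (∑ j, qbar j • g i j)) (by
        intro l hl0 hl1 hk
        have hsum : (∑ i, l i • (vb - (∑ j, qbar j • g i j))) = vb - payoff g l qbar := by
          rw [Finset.sum_congr rfl (fun i _ => smul_sub (l i) vb _), Finset.sum_sub_distrib,
            ← payoff_eq_rowsum, ← Finset.sum_smul, hl1, one_smul]
        rw [hsum] at hk ⊢
        have hle : payoff g l qbar ≤ vb := by
          intro k
          have := hk k
          simp only [Pi.sub_apply] at this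
          linarith
        have heq : payoff g l qbar = vb := hmin2 _ ⟨l, ⟨hl0, hl1⟩, rfl⟩ hle
        rw [heq, sub_self])
    refine ⟨α, β, hαpos, hβpos, ?_, ?_⟩
    · intro q hq
      have h1 : ∀ j, ∑ k, α k * (∑ i, pbar i • g i j) k ≤ ∑ k, α k * vb k := by
        intro j
        have := hαle j
        simp only [Pi.sub_apply, mul_sub] at this
        rw [Finset.sum_sub_distrib] at this
        linarith
      have expand : ∑ k, α k * payoff g pbar q k
          = ∑ j, q j * ∑ k, α k * (∑ i, pbar i • g i j) k := by
        rw [payoff_eq_colsum]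
        simp only [Finset.sum_apply, Pi.smul_apply, smul_eq_mul, Finset.mul_sum]
        rw [Finset.sum_comm]
        exact Finset.sum_congr rfl fun j _ => Finset.sum_congr rfl fun k _ => Finset.sum_congr rfl fun _ _ => by ring
      rw [expand]
      calc ∑ j, q j * ∑ k, α k * (∑ i, pbar i • g i j) k
          ≤ ∑ j, q j * ∑ k, α k * vb k :=
            Finset.sum_le_sum fun j _ => mul_le_mul_of_nonneg_left (h1 j) (hq.1 j)
        _ = ∑ k, α k * vb k := by rw [← Finset.sum_mul, hq.2, one_mul]
    · intro p hp
      have h1 : ∀ i, ∑ k, β k * vb k ≤ ∑ k, β k * (∑ j, qbar j • g i j) k := by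
        intro i
        have := hβle i
        simp only [Pi.sub_apply, mul_sub] at this
        rw [Finset.sum_sub_distrib] at this
        linarith
      have expand : ∑ k, β k * payoff g p qbar k
          = ∑ i, p i * ∑ k, β k * (∑ j, qbar j • g i j) k := by
        rw [payoff_eq_rowsum]
        simp only [Finset.sum_apply, Pi.smul_apply, smul_eq_mul, Finset.mul_sum]
        rw [Finset.sum_comm]
        exact Finset.sum_congr rfl fun i _ => Finset.sum_congr rfl fun k _ => Finset.sum_congr rfl fun _ _ => by ring
      rw [expand]
      calc ∑ k, β k * vb k = ∑ i, p i * ∑ k, β k * vb k := by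
            rw [← Finset.sum_mul, hp.2, one_mul]
        _ ≤ ∑ i, p i * ∑ k, β k * (∑ j, qbar j • g i j) k :=
            Finset.sum_le_sum fun i _ => mul_le_mul_of_nonneg_left (h1 i) (hp.1 i)
  · rintro ⟨α, β, hαpos, hβpos, hαmax, hβmin⟩
    constructor
    · refine ⟨⟨qbar, hqbar, rfl⟩, ?_⟩
      rintro y ⟨q, hq, rfl⟩ hle
      have h1 := hαmax q hq
      have h2 : ∀ k, α k * vb k ≤ α k * payoff g pbar q k :=
        fun k => mul_le_mul_of_nonneg_left (hle k) (hαpos k).le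
      have hsum : ∑ k, (α k * payoff g pbar q k - α k * vb k) = 0 := by
        rw [Finset.sum_sub_distrib]
        have := Finset.sum_le_sum (fun k (_ : k ∈ Finset.univ) => h2 k)
        linarith
      have heach := (Finset.sum_eq_zero_iff_of_nonneg
        (fun k _ => by have := h2 k; linarith)).mp hsum
      funext k
      have hk := heach k (Finset.mem_univ k)
      have h3 : α k * (payoff g pbar q k - vb k) = 0 := by rw [mul_sub]; linarith
      rcases mul_eq_zero.mp h3 with h | h
      · exact absurd h (hαpos k).ne'
      · linarith
    · refine ⟨⟨pbar, hpbar, rfl⟩, ?_⟩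
      rintro y ⟨p, hp, rfl⟩ hle
      have h1 := hβmin p hp
      have h2 : ∀ k, β k * payoff g p qbar k ≤ β k * vb k :=
        fun k => mul_le_mul_of_nonneg_left (hle k) (hβpos k).le
      have hsum : ∑ k, (β k * vb k - β k * payoff g p qbar k) = 0 := by
        rw [Finset.sum_sub_distrib]
        have := Finset.sum_le_sum (fun k (_ : k ∈ Finset.univ) => h2 k)
        linarith
      have heach := (Finset.sum_eq_zero_iff_of_nonneg
        (fun k _ => by have := h2 k; linarith)).mp hsum
      funext k
      have hk := heach k (Finset.mem_univ k)
      have h3 : β k * (vb k - payoff g p qbar k) = 0 := by rw [mul_sub]; linarith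
      rcases mul_eq_zero.mp h3 with h | h
      · exact absurd h (hβpos k).ne'
      · linarith
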